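/- Let 𝒜, ℬ be symmetric m-th order n-dimensional tensors with ℬ strictly copositive. Then the largest Pareto-eigenvalue λ^max of (𝒜, ℬ) equals the maximum of λ(x) = 𝒜x^m/ℬx^m over the simplex S = {x ∈ ℝ₊ⁿ : Σx_i = 1}. -/

import Mathlib

open Finset

noncomputable def tpow {m n : ℕ} (A : (Fin m → Fin n) → ℝ) (x : Fin n → ℝ) : ℝ :=
  ∑ i : Fin m → Fin n, A i * ∏ k, x (i k)

noncomputable def tmap {m n : ℕ} [NeZero m] (A : (Fin m → Fin n) → ℝ) (x : Fin n → ℝ)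
    (i : Fin n) : ℝ :=
  ∑ j : Fin m → Fin n, if j 0 = i then A j * ∏ k ∈ Finset.univ.erase (0 : Fin m), x (j k) else 0

def TSymm {m n : ℕ} (A : (Fin m → Fin n) → ℝ) : Prop :=
  ∀ (σ : Equiv.Perm (Fin m)) (i : Fin m → Fin n), A (i ∘ σ) = A i

lemma tpow_smul {m n : ℕ} (A : (Fin m → Fin n) → ℝ) (x : Fin n → ℝ) (c : ℝ) :
    tpow A (c • x) = c ^ m * tpow A x := by
  unfold tpow
  rw [Finset.mul_sum]
  refine Finset.sum_congr rfl fun j _ => ?_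
  simp only [Pi.smul_apply, smul_eq_mul, Finset.prod_mul_distrib, Finset.prod_const,
    Finset.card_univ, Fintype.card_fin]
  ring

lemma tpow_continuous {m n : ℕ} (A : (Fin m → Fin n) → ℝ) : Continuous (tpow A) := by
  unfold tpow
  exact continuous_finset_sum _ fun j _ =>
    continuous_const.mul (continuous_finset_prod _ fun k _ => continuous_apply _)

lemma tpow_zero {m n : ℕ} [NeZero m] (A : (Fin m → Fin n) → ℝ) : tpow A 0 = 0 := by
  unfold tpow
  simp [zero_pow (NeZero.ne m)]

lemma sum_mul_tmap {m n : ℕ} [NeZero m] (A : (Fin m → Fin n) → ℝ) (x : Fin n → ℝ) :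
    ∑ i, x i * tmap A x i = tpow A x := by
  unfold tmap tpow
  simp_rw [Finset.mul_sum, mul_ite, mul_zero]
  rw [Finset.sum_comm]
  refine Finset.sum_congr rfl fun j _ => ?_
  rw [Finset.sum_ite_eq Finset.univ (j 0)
    (fun i => x i * (A j * ∏ k ∈ Finset.univ.erase (0 : Fin m), x (j k)))]
  rw [if_pos (Finset.mem_univ _),
    ← Finset.mul_prod_erase Finset.univ (fun k => x (j k)) (Finset.mem_univ (0 : Fin m))]
  ring

lemma tmap_perm {m n : ℕ} [NeZero m] (A : (Fin m → Fin n) → ℝ) (hA : TSymm A)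
    (x : Fin n → ℝ) (i : Fin n) (k : Fin m) :
    (∑ j : Fin m → Fin n, if j k = i then A j * ∏ l ∈ Finset.univ.erase k, x (j l) else 0)
      = tmap A x i := by
  unfold tmap
  refine Fintype.sum_equiv ((Equiv.swap (0:Fin m) k).symm.arrowCongr (Equiv.refl (Fin n)))
    _ _ fun j => ?_
  have hj : ((Equiv.swap (0:Fin m) k).symm.arrowCongr (Equiv.refl (Fin n))) j
      = j ∘ (Equiv.swap (0:Fin m) k) := by
    ext l; simp [Equiv.arrowCongr]
  rw [hj, hA (Equiv.swap (0:Fin m) k) j]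
  simp only [Function.comp_apply, Equiv.swap_apply_left]
  by_cases hik : j k = i
  · rw [if_pos hik, if_pos hik]
    congr 1
    refine Finset.prod_bij' (fun a _ => Equiv.swap (0:Fin m) k a)
      (fun a _ => Equiv.swap (0:Fin m) k a) ?_ ?_ ?_ ?_ ?_
    · intro a ha
      rw [Finset.mem_erase] at ha ⊢
      refine ⟨fun h => ha.1 ?_, Finset.mem_univ _⟩
      have := congrArg (Equiv.swap (0:Fin m) k) h
      simpa using this
    · intro a ha
      rw [Finset.mem_erase] at ha ⊢
      refine ⟨fun h => ha.1 ?_, Finset.mem_univ _⟩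
      have := congrArg (Equiv.swap (0:Fin m) k) h
      simpa using this
    · intro a _; simp
    · intro a _; simp
    · intro a _; rw [Equiv.swap_apply_self]
  · rw [if_neg hik, if_neg hik]

lemma tpow_hasDerivAt {m n : ℕ} [NeZero m] (A : (Fin m → Fin n) → ℝ) (hA : TSymm A)
    (x : Fin n → ℝ) (i : Fin n) :
    HasDerivAt (fun t : ℝ => tpow A (x + t • (Pi.single i 1 : Fin n → ℝ)))
      (m * tmap A x i) 0 := by
  have key : ∀ j : Fin m → Fin n, HasDerivAt
      (fun t : ℝ => A j * ∏ k, (x (j k) + t * (Pi.single i 1 : Fin n → ℝ) (j k)))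
      (A j * ∑ k, (∏ l ∈ Finset.univ.erase k, x (j l)) *
        (Pi.single i 1 : Fin n → ℝ) (j k)) 0 := by
    intro j
    have h1 : ∀ k ∈ (Finset.univ : Finset (Fin m)), HasDerivAt
        (fun t : ℝ => x (j k) + t * (Pi.single i 1 : Fin n → ℝ) (j k))
        ((Pi.single i 1 : Fin n → ℝ) (j k)) 0 :=
      fun k _ => (hasDerivAt_mul_const _).const_add _
    have h2 := HasDerivAt.finset_prod h1
    have h3 := h2.const_mul (A j)
    simpa [smul_eq_mul] using h3
  have hsum := HasDerivAt.fun_sum (u := (Finset.univ : Finset (Fin m → Fin n)))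
    (fun j _ => key j)
  have heq : (fun t : ℝ => ∑ j : Fin m → Fin n,
        A j * ∏ k, (x (j k) + t * (Pi.single i 1 : Fin n → ℝ) (j k)))
      = fun t : ℝ => tpow A (x + t • (Pi.single i 1 : Fin n → ℝ)) := by
    funext t
    unfold tpow
    refine Finset.sum_congr rfl fun j _ => ?_
    congr 1
  rw [heq] at hsum
  have hval : (∑ j : Fin m → Fin n, A j * ∑ k, (∏ l ∈ Finset.univ.erase k, x (j l)) *
      (Pi.single i 1 : Fin n → ℝ) (j k)) = m * tmap A x i := by
    simp_rw [Finset.mul_sum]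
    rw [Finset.sum_comm]
    have hk : ∀ k : Fin m, (∑ j : Fin m → Fin n,
        A j * ((∏ l ∈ Finset.univ.erase k, x (j l)) *
          (Pi.single i 1 : Fin n → ℝ) (j k))) = tmap A x i := by
      intro k
      rw [← tmap_perm A hA x i k]
      refine Finset.sum_congr rfl fun j _ => ?_
      rw [Pi.single_apply]
      by_cases h : j k = i
      · rw [if_pos h, if_pos h]; ring
      · rw [if_neg h, if_neg h]; ring
    simp_rw [hk]
    simp [Finset.card_univ]
  rw [hval] at hsum
  exact hsum

lemma deriv_nonneg_of_min {φ : ℝ → ℝ} {d : ℝ} (h : HasDerivAt φ d 0) (h0 : φ 0 = 0)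
    (hpos : ∀ t, 0 ≤ t → 0 ≤ φ t) : 0 ≤ d := by
  have h1 : Filter.Tendsto (slope φ 0) (nhdsWithin 0 {0}ᶜ) (nhds d) :=
    hasDerivAt_iff_tendsto_slope.1 h
  have h2 : Filter.Tendsto (slope φ 0) (nhdsWithin 0 (Set.Ioi 0)) (nhds d) :=
    h1.mono_left (nhdsWithin_mono _ fun t ht => ne_of_gt ht)
  refine ge_of_tendsto h2 ?_
  filter_upwards [self_mem_nhdsWithin] with t ht
  rw [slope_def_field, h0]
  have ht' : (0:ℝ) < t := ht
  have := hpos t ht'.le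
  apply div_nonneg <;> linarith

/-- the largest Pareto-eigenvalue of (𝒜,ℬ) equals the maximum of the
generalized Rayleigh quotient over the standard simplex. -/
theorem largest_pareto_eigenvalue_eq_max_rayleigh {m n : ℕ} [NeZero m] (hn : 0 < n)
    (A B : (Fin m → Fin n) → ℝ) (hA : TSymm A) (hB : TSymm B)
    (hBcop : ∀ x : Fin n → ℝ, (∀ i, 0 ≤ x i) → x ≠ 0 → 0 < tpow B x) :
    ∃ L : ℝ,
      IsGreatest {lam : ℝ | ∃ x : Fin n → ℝ, (∀ i, 0 ≤ x i) ∧ x ≠ 0 ∧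
        (∀ i, 0 ≤ lam * tmap B x i - tmap A x i) ∧
        ∑ i, x i * (lam * tmap B x i - tmap A x i) = 0} L ∧
      IsGreatest ((fun x => tpow A x / tpow B x) ''
        {x : Fin n → ℝ | (∀ i, 0 ≤ x i) ∧ ∑ i, x i = 1}) L := by
  classical
  set S : Set (Fin n → ℝ) := {x | (∀ i, 0 ≤ x i) ∧ ∑ i, x i = 1} with hS
  have hSne0 : ∀ x ∈ S, x ≠ 0 := by
    rintro x ⟨hx1, hx2⟩ rfl
    simp at hx2
  have hclosed : IsClosed S := by
    have : S = (⋂ i, {x : Fin n → ℝ | 0 ≤ x i}) ∩ {x : Fin n → ℝ | ∑ i, x i = 1} := by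
      ext x; simp [hS, Set.mem_iInter]
    rw [this]
    exact IsClosed.inter (isClosed_iInter fun i =>
        isClosed_le continuous_const (continuous_apply i))
      (isClosed_eq (continuous_finset_sum _ fun i _ => continuous_apply i) continuous_const)
  have hsub : S ⊆ Set.Icc (0 : Fin n → ℝ) 1 := by
    rintro x ⟨hx1, hx2⟩
    refine ⟨fun i => hx1 i, fun i => ?_⟩
    calc x i ≤ ∑ j, x j := Finset.single_le_sum (fun j _ => hx1 j) (Finset.mem_univ i)
    _ = 1 := hx2
  have hcompact : IsCompact S := isCompact_Icc.of_isClosed_subset hclosed hsub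
  have hSnonempty : S.Nonempty := by
    refine ⟨(Pi.single ⟨0, hn⟩ 1 : Fin n → ℝ), fun i => ?_, ?_⟩
    · rw [Pi.single_apply]; split <;> norm_num
    · simp
  have hBpos : ∀ x ∈ S, 0 < tpow B x := fun x hx => hBcop x hx.1 (hSne0 x hx)
  have hcont : ContinuousOn (fun x => tpow A x / tpow B x) S :=
    ((tpow_continuous A).continuousOn).div ((tpow_continuous B).continuousOn)
      (fun x hx => (hBpos x hx).ne')
  obtain ⟨x0, hx0S, hx0max⟩ := hcompact.exists_isMaxOn hSnonempty hcont
  set L : ℝ := tpow A x0 / tpow B x0 with hL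
  have hBx0 : 0 < tpow B x0 := hBpos x0 hx0S
  have hLB : L * tpow B x0 = tpow A x0 := by
    rw [hL]; field_simp
  -- global bound
  have hbound : ∀ y : Fin n → ℝ, (∀ i, 0 ≤ y i) → tpow A y ≤ L * tpow B y := by
    intro y hy
    by_cases hy0 : y = 0
    · subst hy0; rw [tpow_zero, tpow_zero]; simp
    · have hs : 0 < ∑ i, y i := by
        obtain ⟨i, hi⟩ := Function.ne_iff.1 hy0
        have : 0 < y i := lt_of_le_of_ne (hy i) (by simpa using (Ne.symm hi))
        exact Finset.sum_pos' (fun j _ => hy j) ⟨i, Finset.mem_univ i, this⟩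
      set s := ∑ i, y i with hsdef
      have hz : (s⁻¹ • y) ∈ S := by
        constructor
        · intro i; exact mul_nonneg (inv_nonneg.2 hs.le) (hy i)
        · simp only [Pi.smul_apply, smul_eq_mul, ← Finset.mul_sum, ← hsdef]
          exact inv_mul_cancel₀ hs.ne'
      have hq := hx0max hz
      simp only [Set.mem_setOf_eq] at hq
      have hBz : 0 < tpow B (s⁻¹ • y) := hBpos _ hz
      have hAz : tpow A (s⁻¹ • y) ≤ L * tpow B (s⁻¹ • y) := by
        rw [div_le_iff₀ hBz] at hq
        exact hq
      rw [tpow_smul, tpow_smul, inv_pow] at hAz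
      have hsm : (0:ℝ) < s ^ m := pow_pos hs m
      have h2 := mul_le_mul_of_nonneg_left hAz hsm.le
      have e1 : s ^ m * ((s ^ m)⁻¹ * tpow A y) = tpow A y := by
        field_simp
      have e2 : s ^ m * (L * ((s ^ m)⁻¹ * tpow B y)) = L * tpow B y := by
        field_simp
      rw [e1, e2] at h2
      exact h2
  have hmpos : (0:ℝ) < m := by exact_mod_cast Nat.pos_of_ne_zero (NeZero.ne m)
  have hK : ∀ i, 0 ≤ L * tmap B x0 i - tmap A x0 i := by
    intro i
    have hder : HasDerivAt
        (fun t : ℝ => L * tpow B (x0 + t • (Pi.single i 1 : Fin n → ℝ))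
          - tpow A (x0 + t • (Pi.single i 1 : Fin n → ℝ)))
        (L * (m * tmap B x0 i) - m * tmap A x0 i) 0 :=
      ((tpow_hasDerivAt B hB x0 i).const_mul L).sub (tpow_hasDerivAt A hA x0 i)
    have h0 : L * tpow B (x0 + (0:ℝ) • (Pi.single i 1 : Fin n → ℝ))
        - tpow A (x0 + (0:ℝ) • (Pi.single i 1 : Fin n → ℝ)) = 0 := by
      simp [hLB]
    have hpos : ∀ t : ℝ, 0 ≤ t →
        0 ≤ L * tpow B (x0 + t • (Pi.single i 1 : Fin n → ℝ))
          - tpow A (x0 + t • (Pi.single i 1 : Fin n → ℝ)) := by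
      intro t ht
      have hnn : ∀ j, 0 ≤ (x0 + t • (Pi.single i 1 : Fin n → ℝ)) j := by
        intro j
        have hxj := hx0S.1 j
        simp only [Pi.add_apply, Pi.smul_apply, smul_eq_mul, Pi.single_apply]
        split
        · linarith
        · linarith [mul_zero t]
      linarith [hbound _ hnn]
    have := deriv_nonneg_of_min hder h0 hpos
    nlinarith
  have hsum0 : ∑ i, x0 i * (L * tmap B x0 i - tmap A x0 i) = 0 := by
    have heq : ∑ i, x0 i * (L * tmap B x0 i - tmap A x0 i)
        = L * (∑ i, x0 i * tmap B x0 i) - ∑ i, x0 i * tmap A x0 i := by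
      rw [Finset.mul_sum, ← Finset.sum_sub_distrib]
      exact Finset.sum_congr rfl fun i _ => by ring
    rw [heq, sum_mul_tmap, sum_mul_tmap, hLB, sub_self]
  refine ⟨L, ⟨⟨x0, hx0S.1, hSne0 x0 hx0S, hK, hsum0⟩, ?_⟩,
    ⟨⟨x0, hx0S, rfl⟩, ?_⟩⟩
  · rintro lam ⟨x, hx1, hx2, _, hxsum⟩
    have hBx : 0 < tpow B x := hBcop x hx1 hx2
    have hxeq : lam * tpow B x = tpow A x := by
      have heq : ∑ i, x i * (lam * tmap B x i - tmap A x i)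
          = lam * (∑ i, x i * tmap B x i) - ∑ i, x i * tmap A x i := by
        rw [Finset.mul_sum, ← Finset.sum_sub_distrib]
        exact Finset.sum_congr rfl fun i _ => by ring
      rw [heq, sum_mul_tmap, sum_mul_tmap] at hxsum
      linarith
    have hs : 0 < ∑ i, x i := by
      obtain ⟨i, hi⟩ := Function.ne_iff.1 hx2
      have : 0 < x i := lt_of_le_of_ne (hx1 i) (by simpa using (Ne.symm hi))
      exact Finset.sum_pos' (fun j _ => hx1 j) ⟨i, Finset.mem_univ i, this⟩
    set s := ∑ i, x i with hsdef
    have hz : (s⁻¹ • x) ∈ S := by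
      constructor
      · intro i; exact mul_nonneg (inv_nonneg.2 hs.le) (hx1 i)
      · simp only [Pi.smul_apply, smul_eq_mul, ← Finset.mul_sum, ← hsdef]
        exact inv_mul_cancel₀ hs.ne'
    have hq := hx0max hz
    simp only [Set.mem_setOf_eq] at hq
    have hpow : (0:ℝ) < (s⁻¹) ^ m := pow_pos (inv_pos.2 hs) m
    have hlam : tpow A (s⁻¹ • x) / tpow B (s⁻¹ • x) = lam := by
      rw [tpow_smul, tpow_smul, mul_div_mul_left _ _ hpow.ne', ← hxeq,
        mul_div_assoc, div_self hBx.ne', mul_one]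
    rw [hlam] at hq
    exact hq
  · rintro v ⟨x, hxS, rfl⟩
    exact hx0max hxS
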